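/- Let A be a C*-algebra, let b be a positive element of A, and let δ > 0. If c is a positive element of A lying in the closure of the set {(b − δ)_+ · y · (b − δ)_+ : y ∈ A} (the hereditary subalgebra of A generated by (b − δ)_+), then c ≤ (‖c‖/δ) b. -/

import Mathlib

/-- An element of a star ring is positive if it is of the form `y* y`.
(In a C*-algebra this characterizes the positive elements.)  In particular,
for self-adjoint `x, y` the canonical order satisfies `x ≤ y ↔ IsPositive (y - x)`. -/
def IsPositive {R : Type*} [NonUnitalSemiring R] [StarRing R] (a : R) : Prop :=
  ∃ y : R, a = star y * y

/-- The "δ-cutdown" `(b - δ)₊` of an element `b`, obtained by applying the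
non-unital continuous functional calculus with the function `t ↦ max (t - δ) 0`. -/
noncomputable def cutdown {A : Type*} [NonUnitalCStarAlgebra A] (b : A) (δ : ℝ) : A :=
  cfcₙ (fun t : ℝ => max (t - δ) 0) b

open Unitization in
/-- If `b` is a positive element of a C*-algebra `A`, `δ > 0`, and `c` is a
positive element of the hereditary subalgebra generated by `(b - δ)₊`
(the closure of `(b - δ)₊ A (b - δ)₊`), then `c ≤ (‖c‖ / δ) b`, i.e.
`(‖c‖ / δ) • b - c` is positive. -/
theorem le_smul_of_mem_hereditary
    {A : Type*} [NonUnitalCStarAlgebra A] (b : A) (hb : IsPositive b)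
    (δ : ℝ) (hδ : 0 < δ) (c : A) (hc : IsPositive c)
    (hmem : c ∈ closure {x : A | ∃ y : A, x = cutdown b δ * y * cutdown b δ}) :
    IsPositive ((‖c‖ / δ) • b - c) := by
  obtain ⟨w, hw⟩ := hb
  have hbsa : IsSelfAdjoint b := hw ▸ IsSelfAdjoint.star_mul_self w
  obtain ⟨v, hv⟩ := hc
  have hcsa : IsSelfAdjoint c := hv ▸ IsSelfAdjoint.star_mul_self v
  let _ : PartialOrder (Unitization ℂ A) := CStarAlgebra.spectralOrder _
  have _ : StarOrderedRing (Unitization ℂ A) := CStarAlgebra.spectralOrderedRing _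
  have hb1 : (0 : Unitization ℂ A) ≤ (b : Unitization ℂ A) := by
    rw [hw, inr_mul, inr_star]
    exact star_mul_self_nonneg _
  have hc1 : (0 : Unitization ℂ A) ≤ (c : Unitization ℂ A) := by
    rw [hv, inr_mul, inr_star]
    exact star_mul_self_nonneg _
  have hqb : ∀ t ∈ quasispectrum ℝ b, 0 ≤ t := by
    intro t ht
    rw [Unitization.quasispectrum_eq_spectrum_inr' ℝ ℂ b] at ht
    exact spectrum_nonneg_of_nonneg hb1 ht
  -- the function g and the element d
  set g : ℝ → ℝ := fun t => min (t / δ) 1 with hg_def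
  have hg_cont : Continuous g := by fun_prop
  have hg0 : g 0 = 0 := by simp [hg_def]
  set d : A := cfcₙ g b with hd_def
  have hdsa : IsSelfAdjoint d := cfcₙ_predicate g b
  have hf0 : max (0 - δ) 0 = (0:ℝ) := by simp [hδ.le]
  have hf_cont : Continuous (fun t : ℝ => max (t - δ) 0) := by fun_prop
  -- d acts as a unit on cutdown b δ
  have hgf : (fun t : ℝ => g t * max (t - δ) 0) = fun t => max (t - δ) 0 := by
    funext t
    rcases le_or_gt t δ with h | h
    · simp [max_eq_right (sub_nonpos.mpr h)]
    · have : g t = 1 := min_eq_right ((one_le_div hδ).mpr h.le)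
      rw [this, one_mul]
  have h1 : d * cutdown b δ = cutdown b δ := by
    rw [hd_def, cutdown, ← cfcₙ_mul g _ b (hg_cont.continuousOn) hg0 (hf_cont.continuousOn) hf0,
      hgf]
  have hfg : (fun t : ℝ => max (t - δ) 0 * g t) = fun t => max (t - δ) 0 := by
    funext t
    rcases le_or_gt t δ with h | h
    · simp [max_eq_right (sub_nonpos.mpr h)]
    · have : g t = 1 := min_eq_right ((one_le_div hδ).mpr h.le)
      rw [this, mul_one]
  have h2 : cutdown b δ * d = cutdown b δ := by
    rw [hd_def, cutdown, ← cfcₙ_mul _ g b (hf_cont.continuousOn) hf0 (hg_cont.continuousOn) hg0,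
      hfg]
  -- d c d = c
  have hdcd : d * c * d = c := by
    have hcl : IsClosed {x : A | d * x * d = x} := isClosed_eq (by fun_prop) continuous_id
    have hsub : {x : A | ∃ y : A, x = cutdown b δ * y * cutdown b δ} ⊆ {x | d * x * d = x} := by
      rintro x ⟨y, rfl⟩
      show d * (cutdown b δ * y * cutdown b δ) * d = _
      calc d * (cutdown b δ * y * cutdown b δ) * d
          = (d * cutdown b δ) * y * (cutdown b δ * d) := by simp only [mul_assoc]
        _ = cutdown b δ * y * cutdown b δ := by rw [h1, h2]
    exact closure_minimal hsub hcl hmem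
  -- b - δ • (d * d) is positive
  have hh0 : (fun t : ℝ => t - δ * (g t * g t)) 0 = 0 := by simp [hg0]
  have hh_cont : Continuous (fun t : ℝ => t - δ * (g t * g t)) := by fun_prop
  have hh_nonneg : ∀ t : ℝ, 0 ≤ t → 0 ≤ t - δ * (g t * g t) := by
    intro t ht
    rcases le_or_gt t δ with h | h
    · have hgt : g t = t / δ := min_eq_left ((div_le_one hδ).mpr h)
      rw [hgt, sub_nonneg]
      have heq : δ * (t / δ * (t / δ)) = t * t / δ := by field_simp
      rw [heq, div_le_iff₀ hδ]
      nlinarith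
    · have hgt : g t = 1 := min_eq_right ((one_le_div hδ).mpr h.le)
      rw [hgt, mul_one, mul_one, sub_nonneg]
      exact h.le
  have hkey : ∃ s : A, b - δ • (d * d) = star s * s := by
    refine ⟨cfcₙ (fun t => Real.sqrt (t - δ * (g t * g t))) b, ?_⟩
    have hssa : IsSelfAdjoint (cfcₙ (fun t => Real.sqrt (t - δ * (g t * g t))) b) :=
      cfcₙ_predicate _ b
    rw [hssa.star_eq, ← cfcₙ_mul (fun t : ℝ => Real.sqrt (t - δ * (g t * g t)))
      (fun t : ℝ => Real.sqrt (t - δ * (g t * g t))) b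
      (Continuous.continuousOn (by fun_prop)) (by simp [hg0])
      (Continuous.continuousOn (by fun_prop)) (by simp [hg0])]
    rw [cfcₙ_congr (g := fun t : ℝ => t - δ * (g t * g t))
      (fun t ht => Real.mul_self_sqrt (hh_nonneg t (hqb t ht)))]
    rw [cfcₙ_sub (fun t : ℝ => t) (fun t : ℝ => δ * (g t * g t)) b
      (Continuous.continuousOn (by fun_prop)) rfl
      (Continuous.continuousOn (by fun_prop)) (by simp [hg0])]
    rw [cfcₙ_id' ℝ b, cfcₙ_const_mul δ (fun t : ℝ => g t * g t) b
      ((hg_cont.mul hg_cont).continuousOn) (by simp [hg0])]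
    rw [cfcₙ_mul g g b (hg_cont.continuousOn) hg0 (hg_cont.continuousOn) hg0]
  -- move to the unitization and conclude
  obtain ⟨s, hs⟩ := hkey
  have hdd1 : δ • ((d : Unitization ℂ A) * d) ≤ (b : Unitization ℂ A) := by
    rw [← sub_nonneg]
    have : ((b - δ • (d * d) : A) : Unitization ℂ A)
        = (b : Unitization ℂ A) - δ • ((d : Unitization ℂ A) * d) := by
      rw [inr_sub, inr_smul, inr_mul]
    rw [← this, hs, inr_mul, inr_star]
    exact star_mul_self_nonneg _
  have hchain : (c : Unitization ℂ A) ≤ (‖c‖ / δ) • (b : Unitization ℂ A) := by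
    calc (c : Unitization ℂ A) = ((d * c * d : A) : Unitization ℂ A) := by rw [hdcd]
      _ = star (d : Unitization ℂ A) * (c : Unitization ℂ A) * (d : Unitization ℂ A) := by
          rw [inr_mul, inr_mul, (hdsa.inr ℂ).star_eq]
      _ ≤ ‖(c : Unitization ℂ A)‖ • (star (d : Unitization ℂ A) * (d : Unitization ℂ A)) :=
          CStarAlgebra.star_left_conjugate_le_norm_smul (hcsa.inr ℂ)
      _ = (‖c‖ / δ) • (δ • ((d : Unitization ℂ A) * d)) := by
          rw [(hdsa.inr ℂ).star_eq, norm_inr, smul_smul, div_mul_cancel₀ _ hδ.ne']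
      _ ≤ (‖c‖ / δ) • (b : Unitization ℂ A) :=
          smul_le_smul_of_nonneg_left hdd1 (by positivity)
  have hx1 : (0 : Unitization ℂ A) ≤ (((‖c‖ / δ) • b - c : A) : Unitization ℂ A) := by
    rw [inr_sub, inr_smul]
    exact sub_nonneg.mpr hchain
  have hqx : ∀ t ∈ quasispectrum ℝ ((‖c‖ / δ) • b - c), 0 ≤ t := by
    intro t ht
    rw [Unitization.quasispectrum_eq_spectrum_inr' ℝ ℂ] at ht
    exact spectrum_nonneg_of_nonneg hx1 ht
  have hxsa : IsSelfAdjoint ((‖c‖ / δ) • b - c) := (IsSelfAdjoint.smul (star_trivial (‖c‖ / δ)) hbsa).sub hcsa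
  refine ⟨cfcₙ Real.sqrt ((‖c‖ / δ) • b - c), ?_⟩
  have hssa : IsSelfAdjoint (cfcₙ Real.sqrt ((‖c‖ / δ) • b - c)) := cfcₙ_predicate _ _
  rw [hssa.star_eq, ← cfcₙ_mul _ _ _ (Real.continuous_sqrt.continuousOn) Real.sqrt_zero
    (Real.continuous_sqrt.continuousOn) Real.sqrt_zero,
    cfcₙ_congr (g := fun t : ℝ => t) (fun t ht => Real.mul_self_sqrt (hqx t ht)),
    cfcₙ_id' ℝ _ hxsa]
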